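/- Let μ be a probability measure on the unit circle with infinite support, (Φ_n) its monic orthogonal polynomials, φ_n = Φ_n/‖Φ_n‖_μ its orthonormal polynomials, 0 < γ < 1, ζ = e^{iω} on the unit circle, and ν = (1-γ)μ + γδ_ω. Then the monic orthogonal polynomials of ν satisfy the Geronimus formula Φ_n(z, dν) = Φ_n(z) − Φ_n(ζ) K_{n-1}(z, ζ) / ((1-γ)γ^{-1} + K_{n-1}(ζ, ζ)), where K_{n-1}(z, ζ) = Σ_{j=0}^{n-1} conj(φ_j(ζ)) φ_j(z). -/

import Mathlib

open MeasureTheory Polynomial Finset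

noncomputable section

/-- The `L²(μ)` inner product `⟨f,g⟩_μ = ∫ conj (f z) * g z dμ(z)`. -/
def mInner (μ : Measure ℂ) (f g : ℂ → ℂ) : ℂ :=
  ∫ z, (starRingEnd ℂ) (f z) * g z ∂μ

/-- The `L²(μ)` norm `‖f‖_μ = (∫ |f z|² dμ(z))^{1/2}`. -/
def mNorm (μ : Measure ℂ) (f : ℂ → ℂ) : ℝ :=
  Real.sqrt (∫ z, ‖f z‖ ^ 2 ∂μ)

/-- `Φ` is the family of monic orthogonal polynomials for `μ`:
`Φ n` is monic of degree `n`, and distinct `Φ`'s are orthogonal in `L²(μ)`. -/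
def IsMonicOPS (μ : Measure ℂ) (Φ : ℕ → Polynomial ℂ) : Prop :=
  (∀ n, (Φ n).Monic ∧ (Φ n).natDegree = n) ∧
    ∀ m n, m ≠ n →
      mInner μ (fun z => (Φ m).eval z) (fun z => (Φ n).eval z) = 0

/-- `μ` is a measure on the unit circle `∂𝔻 = {z : ℂ | |z| = 1}`. -/
def OnCircle (μ : Measure ℂ) : Prop := μ {z : ℂ | ‖z‖ = 1}ᶜ = 0

/-- The (closed) support of `μ` is an infinite set: every closed set of
full measure is infinite. -/
def InfiniteSupport (μ : Measure ℂ) : Prop :=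
  ∀ t : Set ℂ, IsClosed t → μ tᶜ = 0 → t.Infinite

/-! ### Auxiliary lemmas -/

lemma conj_mul_self' (w : ℂ) : (starRingEnd ℂ) w * w = ((‖w‖^2 : ℝ) : ℂ) := by
  rw [Complex.conj_mul']; push_cast; ring

lemma poly_bound (p : Polynomial ℂ) :
    ∃ C : ℝ, ∀ z : ℂ, ‖z‖ = 1 → ‖p.eval z‖ ≤ C := by
  refine ⟨∑ i ∈ Finset.range (p.natDegree+1), ‖p.coeff i‖, fun z hz => ?_⟩
  rw [Polynomial.eval_eq_sum_range]
  refine (norm_sum_le _ _).trans (Finset.sum_le_sum fun i _ => ?_)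
  rw [norm_mul, norm_pow, hz, one_pow, mul_one]

lemma ae_circle {μ : Measure ℂ} (hc : OnCircle μ) : ∀ᵐ z ∂μ, ‖z‖ = 1 := by
  rw [ae_iff]; exact hc

lemma integrable_conj_mul {μ : Measure ℂ} [IsFiniteMeasure μ] (hc : OnCircle μ)
    (p q : Polynomial ℂ) :
    Integrable (fun z => (starRingEnd ℂ) (p.eval z) * q.eval z) μ := by
  obtain ⟨C, hC⟩ := poly_bound p
  obtain ⟨D, hD⟩ := poly_bound q
  have hcont : Continuous fun z : ℂ => (starRingEnd ℂ) (p.eval z) * q.eval z := by continuity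
  refine (integrable_const (C * D)).mono' hcont.aestronglyMeasurable ?_
  filter_upwards [ae_circle hc] with z hz
  rw [norm_mul, RCLike.norm_conj]
  have h1 := hC z hz; have h2 := hD z hz
  nlinarith [norm_nonneg (q.eval z), norm_nonneg (p.eval z)]

lemma integrable_normsq {μ : Measure ℂ} [IsFiniteMeasure μ] (hc : OnCircle μ)
    (p : Polynomial ℂ) : Integrable (fun z => ‖p.eval z‖^2) μ := by
  obtain ⟨C, hC⟩ := poly_bound p
  have hcont : Continuous fun z : ℂ => ‖p.eval z‖^2 := by continuity
  refine (integrable_const (C^2)).mono' hcont.aestronglyMeasurable ?_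
  filter_upwards [ae_circle hc] with z hz
  have := hC z hz
  have h0 : (0:ℝ) ≤ ‖p.eval z‖ := norm_nonneg _
  rw [Real.norm_eq_abs, abs_of_nonneg (by positivity)]
  nlinarith

lemma mInner_conj (μ : Measure ℂ) (f g : ℂ → ℂ) :
    mInner μ f g = (starRingEnd ℂ) (mInner μ g f) := by
  unfold mInner
  rw [← integral_conj]
  congr 1; funext z; simp [mul_comm]

lemma mInner_sub_right {μ : Measure ℂ} [IsFiniteMeasure μ] (hc : OnCircle μ)
    (p q r : Polynomial ℂ) :
    mInner μ (fun z => p.eval z) (fun z => (q - r).eval z)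
      = mInner μ (fun z => p.eval z) (fun z => q.eval z)
        - mInner μ (fun z => p.eval z) (fun z => r.eval z) := by
  unfold mInner
  rw [← integral_sub (integrable_conj_mul hc p q) (integrable_conj_mul hc p r)]
  congr 1; funext z; simp; ring

lemma mInner_add_right {μ : Measure ℂ} [IsFiniteMeasure μ] (hc : OnCircle μ)
    (p q r : Polynomial ℂ) :
    mInner μ (fun z => p.eval z) (fun z => (q + r).eval z)
      = mInner μ (fun z => p.eval z) (fun z => q.eval z)
        + mInner μ (fun z => p.eval z) (fun z => r.eval z) := by
  unfold mInner
  rw [← integral_add (integrable_conj_mul hc p q) (integrable_conj_mul hc p r)]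
  congr 1; funext z; simp; ring

lemma mInner_Cmul_right (μ : Measure ℂ) (p q : Polynomial ℂ) (c : ℂ) :
    mInner μ (fun z => p.eval z) (fun z => (Polynomial.C c * q).eval z)
      = c * mInner μ (fun z => p.eval z) (fun z => q.eval z) := by
  unfold mInner
  rw [← integral_const_mul]
  congr 1; funext z; simp; ring

lemma mInner_sum_right {μ : Measure ℂ} [IsFiniteMeasure μ] (hc : OnCircle μ)
    (p : Polynomial ℂ) (s : Finset ℕ) (a : ℕ → ℂ) (r : ℕ → Polynomial ℂ) :
    mInner μ (fun z => p.eval z) (fun z => (∑ j ∈ s, Polynomial.C (a j) * r j).eval z)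
      = ∑ j ∈ s, a j * mInner μ (fun z => p.eval z) (fun z => (r j).eval z) := by
  classical
  induction s using Finset.induction with
  | empty => simp [mInner]
  | @insert x t h ih =>
      rw [Finset.sum_insert h, mInner_add_right hc, ih, mInner_Cmul_right,
        Finset.sum_insert h]

lemma mInner_add_left {μ : Measure ℂ} [IsFiniteMeasure μ] (hc : OnCircle μ)
    (p q r : Polynomial ℂ) :
    mInner μ (fun z => (p + q).eval z) (fun z => r.eval z)
      = mInner μ (fun z => p.eval z) (fun z => r.eval z)
        + mInner μ (fun z => q.eval z) (fun z => r.eval z) := by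
  rw [mInner_conj, mInner_add_right hc, map_add, ← mInner_conj, ← mInner_conj]

lemma mInner_Cmul_left (μ : Measure ℂ) (p q : Polynomial ℂ) (c : ℂ) :
    mInner μ (fun z => (Polynomial.C c * p).eval z) (fun z => q.eval z)
      = (starRingEnd ℂ) c * mInner μ (fun z => p.eval z) (fun z => q.eval z) := by
  rw [mInner_conj, mInner_Cmul_right, map_mul, ← mInner_conj]

lemma mInner_self (μ : Measure ℂ) (f : ℂ → ℂ) :
    mInner μ f f = ((∫ z, ‖f z‖^2 ∂μ : ℝ) : ℂ) := by
  unfold mInner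
  calc ∫ z, (starRingEnd ℂ) (f z) * f z ∂μ
      = ∫ z, ((‖f z‖^2 : ℝ) : ℂ) ∂μ := by
        congr 1; funext z; exact conj_mul_self' _
    _ = _ := integral_ofReal

lemma normsq_integral_pos {μ : Measure ℂ} [IsFiniteMeasure μ] (hc : OnCircle μ)
    (hs : InfiniteSupport μ) (p : Polynomial ℂ) (hp : p ≠ 0) :
    0 < ∫ z, ‖p.eval z‖^2 ∂μ := by
  rcases lt_or_eq_of_le (integral_nonneg (fun z => by positivity) :
      0 ≤ ∫ z, ‖p.eval z‖^2 ∂μ) with h | h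
  · exact h
  exfalso
  have hae : (fun z => ‖p.eval z‖^2) =ᵐ[μ] 0 := by
    rw [← integral_eq_zero_iff_of_nonneg (fun z => by positivity)
      (integrable_normsq hc p)]
    exact h.symm
  have hz : μ {z : ℂ | p.eval z = 0}ᶜ = 0 := by
    rw [Filter.EventuallyEq, ae_iff] at hae
    refine measure_mono_null ?_ hae
    intro z hz
    simp only [Set.mem_compl_iff, Set.mem_setOf_eq] at hz ⊢
    intro h
    exact hz (by simpa using h)
  have hinf := hs _ (isClosed_eq (by continuity) continuous_const) hz
  exact hp (Polynomial.eq_zero_of_infinite_isRoot p hinf)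

lemma mNorm_pos {μ : Measure ℂ} [IsFiniteMeasure μ] (hc : OnCircle μ)
    (hs : InfiniteSupport μ) (p : Polynomial ℂ) (hp : p ≠ 0) :
    0 < mNorm μ (fun z => p.eval z) :=
  Real.sqrt_pos.2 (normsq_integral_pos hc hs p hp)

lemma mNorm_sq (μ : Measure ℂ) (p : Polynomial ℂ) :
    (mNorm μ (fun z => p.eval z))^2 = ∫ z, ‖p.eval z‖^2 ∂μ :=
  Real.sq_sqrt (integral_nonneg fun z => by positivity)

/-- If `r` is `μ`-orthogonal to `P 0, …, P (n-1)` where `P k` is monic of degree `k`,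
then `r` is orthogonal to every polynomial of degree `< n`. -/
lemma span_orth {μ : Measure ℂ} [IsFiniteMeasure μ] (hc : OnCircle μ)
    (P : ℕ → Polynomial ℂ) (hP : ∀ k, (P k).Monic ∧ (P k).natDegree = k)
    (r : Polynomial ℂ) (n : ℕ)
    (h : ∀ k < n, mInner μ (fun z => (P k).eval z) (fun z => r.eval z) = 0) :
    ∀ q : Polynomial ℂ, q.degree < (n : WithBot ℕ) →
      mInner μ (fun z => q.eval z) (fun z => r.eval z) = 0 := by
  suffices H : ∀ m : ℕ, ∀ q : Polynomial ℂ, q.natDegree < m → q.degree < (n : WithBot ℕ) →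
      mInner μ (fun z => q.eval z) (fun z => r.eval z) = 0 by
    intro q hq
    exact H (q.natDegree + 1) q (Nat.lt_succ_self _) hq
  intro m
  induction m with
  | zero => intro q hq; omega
  | succ m ih =>
    intro q hq hqn
    by_cases h0 : q = 0
    · simp [h0, mInner]
    · set d := q.natDegree with hd
      have hdn : d < n := by
        have := Polynomial.degree_eq_natDegree h0 ▸ hqn
        exact_mod_cast this
      have hPd := hP d
      have hdeg : ((Polynomial.C q.leadingCoeff * P d)).degree = q.degree := by
        rw [Polynomial.degree_C_mul (Polynomial.leadingCoeff_ne_zero.2 h0),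
          Polynomial.degree_eq_natDegree h0,
          Polynomial.degree_eq_natDegree hPd.1.ne_zero, hPd.2]
      have hlc : (Polynomial.C q.leadingCoeff * P d).leadingCoeff = q.leadingCoeff := by
        rw [Polynomial.leadingCoeff_mul, Polynomial.leadingCoeff_C, hPd.1.leadingCoeff,
          mul_one]
      have hsub : (q - Polynomial.C q.leadingCoeff * P d).degree < q.degree :=
        Polynomial.degree_sub_lt hdeg.symm h0 hlc.symm
      set q' := q - Polynomial.C q.leadingCoeff * P d with hq'
      have hrec : mInner μ (fun z => q'.eval z) (fun z => r.eval z) = 0 := by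
        by_cases h0' : q' = 0
        · simp [h0', mInner]
        · refine ih q' ?_ (lt_trans hsub hqn)
          have h1 : q'.natDegree < q.natDegree :=
            Polynomial.natDegree_lt_natDegree h0' hsub
          omega
      have hqe : q = q' + Polynomial.C q.leadingCoeff * P d := by ring
      rw [hqe, mInner_add_left hc, hrec, mInner_Cmul_left, h d hdn, zero_add, mul_zero]

lemma integrable_dirac'' (f : ℂ → ℂ) (hf : Continuous f) (ζ : ℂ) :
    Integrable f (Measure.dirac ζ) := by
  refine (integrable_const ‖f ζ‖).mono' hf.aestronglyMeasurable ?_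
  rw [ae_dirac_eq]
  exact Filter.eventually_pure.2 le_rfl

lemma mInner_combo {μ : Measure ℂ} [IsFiniteMeasure μ] (hc : OnCircle μ)
    (γ : ℝ) (hγ0 : 0 < γ) (hγ1 : γ < 1) (ζ : ℂ) (p q : Polynomial ℂ) :
    mInner (ENNReal.ofReal (1 - γ) • μ + ENNReal.ofReal γ • Measure.dirac ζ)
        (fun z => p.eval z) (fun z => q.eval z)
      = ((1 - γ : ℝ) : ℂ) * mInner μ (fun z => p.eval z) (fun z => q.eval z)
        + (γ : ℂ) * ((starRingEnd ℂ) (p.eval ζ) * q.eval ζ) := by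
  have hcont : Continuous fun z => (starRingEnd ℂ) (p.eval z) * q.eval z := by continuity
  unfold mInner
  rw [integral_add_measure
      ((integrable_conj_mul hc p q).smul_measure ENNReal.ofReal_ne_top)
      ((integrable_dirac'' _ hcont ζ).smul_measure ENNReal.ofReal_ne_top),
    integral_smul_measure, integral_smul_measure, integral_dirac' _ _ hcont.stronglyMeasurable,
    ENNReal.toReal_ofReal (by linarith), ENNReal.toReal_ofReal hγ0.le]
  simp [smul_eq_mul]

/-- **Geronimus' formula.**
`Φ_n(z, dν) = Φ_n(z) - Φ_n(ζ) K_{n-1}(z, ζ) / ((1-γ)γ⁻¹ + K_{n-1}(ζ, ζ))`. -/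
theorem geronimus_formula
    (μ : Measure ℂ) [IsProbabilityMeasure μ] (hcirc : OnCircle μ)
    (hsupp : InfiniteSupport μ)
    (Φ : ℕ → Polynomial ℂ) (hΦ : IsMonicOPS μ Φ)
    (φ : ℕ → ℂ → ℂ)
    (hφ : ∀ m z, φ m z = (Φ m).eval z / (mNorm μ (fun w => (Φ m).eval w) : ℂ))
    (γ : ℝ) (hγ0 : 0 < γ) (hγ1 : γ < 1)
    (ω : ℝ) (ζ : ℂ) (hζ : ζ = Complex.exp (ω * Complex.I))
    (ν : Measure ℂ)
    (hν : ν = ENNReal.ofReal (1 - γ) • μ + ENNReal.ofReal γ • Measure.dirac ζ)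
    (Ψ : ℕ → Polynomial ℂ) (hΨ : IsMonicOPS ν Ψ)
    (n : ℕ) (z : ℂ) :
    (Ψ n).eval z = (Φ n).eval z -
      (Φ n).eval ζ * (∑ j ∈ Finset.range n, (starRingEnd ℂ) (φ j ζ) * φ j z) /
        (((1 - γ) * γ⁻¹ + ∑ j ∈ Finset.range n, ‖φ j ζ‖ ^ 2 : ℝ) : ℂ) := by
  classical
  -- ζ lies on the unit circle
  have hζ1 : ‖ζ‖ = 1 := by
    rw [hζ, Complex.norm_exp]
    simp
  -- ν is a finite measure on the circle with infinite support
  haveI hνfin : IsFiniteMeasure ν := by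
    refine ⟨?_⟩
    rw [hν]
    simp only [Measure.add_apply, Measure.smul_apply, smul_eq_mul, measure_univ, mul_one]
    exact ENNReal.add_lt_top.2 ⟨ENNReal.ofReal_lt_top, ENNReal.ofReal_lt_top⟩
  have hms : MeasurableSet ({z : ℂ | ‖z‖ = 1}ᶜ) :=
    (isClosed_eq (by continuity) continuous_const).measurableSet.compl
  have hνc : OnCircle ν := by
    unfold OnCircle at hcirc ⊢
    rw [hν, Measure.add_apply, Measure.smul_apply, Measure.smul_apply, hcirc,
      Measure.dirac_apply' _ hms]
    simp only [Set.indicator, Set.mem_compl_iff, Set.mem_setOf_eq, hζ1, not_true_eq_false,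
      if_false, ite_false, mul_zero, add_zero, smul_eq_mul, mul_eq_zero]
  have hνs : InfiniteSupport ν := by
    intro t ht h0
    refine hsupp t ht ?_
    rw [hν, Measure.add_apply, add_eq_zero] at h0
    have h1 := h0.1
    rw [Measure.smul_apply, smul_eq_mul, mul_eq_zero] at h1
    rcases h1 with h1 | h1
    · rw [ENNReal.ofReal_eq_zero] at h1; linarith
    · exact h1
  -- norms of the Φ's
  set N : ℕ → ℝ := fun j => mNorm μ (fun w => (Φ j).eval w) with hNdef
  have hN : ∀ j, 0 < N j := fun j => mNorm_pos hcirc hsupp _ (hΦ.1 j).1.ne_zero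
  have hφ' : ∀ (m : ℕ) (w : ℂ), φ m w = (Φ m).eval w / ((N m : ℝ) : ℂ) :=
    fun m w => hφ m w
  have hNC : ∀ j, ((N j : ℝ) : ℂ) ≠ 0 := fun j => by exact_mod_cast (hN j).ne'
  have hself : ∀ j, mInner μ (fun z => (Φ j).eval z) (fun z => (Φ j).eval z)
      = ((N j ^ 2 : ℝ) : ℂ) := fun j => by
    rw [mInner_self]
    norm_cast
    exact (mNorm_sq μ (Φ j)).symm
  set K : ℝ := ∑ j ∈ Finset.range n, ‖φ j ζ‖ ^ 2 with hKdef
  have hK0 : 0 ≤ K := Finset.sum_nonneg fun j _ => by positivity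
  set dd : ℝ := (1 - γ) * γ⁻¹ + K with hddef
  have hdd : 0 < dd := by
    have h1 : 0 < (1 - γ) * γ⁻¹ := by
      have : (0:ℝ) < 1 - γ := by linarith
      positivity
    rw [hddef]
    linarith
  have hddC : ((dd : ℝ) : ℂ) ≠ 0 := by exact_mod_cast hdd.ne'
  set A : ℂ := (Φ n).eval ζ with hA
  set a : ℕ → ℂ := fun j => A / (dd : ℂ) * (starRingEnd ℂ) (φ j ζ) / ((N j : ℝ) : ℂ)
    with hadef
  set S : Polynomial ℂ := ∑ j ∈ Finset.range n, Polynomial.C (a j) * Φ j with hS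
  set Q : Polynomial ℂ := Φ n - S with hQ
  -- degree facts
  have hdegΦ : ∀ j, (Φ j).degree = (j : WithBot ℕ) := fun j => by
    rw [Polynomial.degree_eq_natDegree (hΦ.1 j).1.ne_zero, (hΦ.1 j).2]
  have hSdeg : S.degree < (n : WithBot ℕ) := by
    rw [hS]
    refine lt_of_le_of_lt (Polynomial.degree_sum_le _ _) ?_
    refine (Finset.sup_lt_iff (WithBot.bot_lt_coe n)).2 fun j hj => ?_
    calc (Polynomial.C (a j) * Φ j).degree
        ≤ (Polynomial.C (a j)).degree + (Φ j).degree := Polynomial.degree_mul_le _ _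
      _ ≤ 0 + (j : WithBot ℕ) := add_le_add Polynomial.degree_C_le (hdegΦ j).le
      _ = (j : WithBot ℕ) := zero_add _
      _ < (n : WithBot ℕ) := by exact_mod_cast Finset.mem_range.1 hj
  have hQmonic : Q.Monic := by
    rw [hQ, sub_eq_add_neg]
    refine (hΦ.1 n).1.add_of_left ?_
    rw [Polynomial.degree_neg, hdegΦ n]
    exact hSdeg
  have hQdeg : Q.degree = (n : WithBot ℕ) := by
    rw [hQ, sub_eq_add_neg, Polynomial.degree_add_eq_left_of_degree_lt, hdegΦ n]
    rw [Polynomial.degree_neg, hdegΦ n]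
    exact hSdeg
  -- evaluation of S
  have hSeval : ∀ w, S.eval w
      = A / (dd : ℂ) * ∑ j ∈ Finset.range n, (starRingEnd ℂ) (φ j ζ) * φ j w := by
    intro w
    rw [hS, Polynomial.eval_finset_sum, Finset.mul_sum]
    refine Finset.sum_congr rfl fun j hj => ?_
    rw [Polynomial.eval_mul, Polynomial.eval_C]
    simp only [hadef]
    rw [hφ' j w]
    have := hNC j
    field_simp
  have hKC : ∑ j ∈ Finset.range n, (starRingEnd ℂ) (φ j ζ) * φ j ζ = ((K : ℝ) : ℂ) := by
    rw [hKdef, Complex.ofReal_sum]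
    exact Finset.sum_congr rfl fun j _ => conj_mul_self' _
  have hQζ : Q.eval ζ = A - A * ((K : ℝ) : ℂ) / ((dd : ℝ) : ℂ) := by
    rw [hQ, Polynomial.eval_sub, hSeval ζ, hKC, ← hA]
    ring
  -- key orthogonality: Q ⊥_ν Φ k for k < n
  have key : ∀ k, k < n → mInner ν (fun z => (Φ k).eval z) (fun z => Q.eval z) = 0 := by
    intro k hk
    rw [hν, mInner_combo hcirc γ hγ0 hγ1 ζ]
    have h1 : mInner μ (fun z => (Φ k).eval z) (fun z => Q.eval z)
        = -(a k * ((N k ^ 2 : ℝ) : ℂ)) := by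
      rw [hQ, mInner_sub_right hcirc, hS, mInner_sum_right hcirc,
        hΦ.2 k n hk.ne, zero_sub, Finset.sum_eq_single k]
      · rw [hself k]
      · intro j hj hjk
        rw [hΦ.2 k j (Ne.symm hjk), mul_zero]
      · intro h
        exact absurd (Finset.mem_range.2 hk) h
    have hak : a k * ((N k ^ 2 : ℝ) : ℂ)
        = A / (dd : ℂ) * (starRingEnd ℂ) ((Φ k).eval ζ) := by
      simp only [hadef]
      rw [hφ' k ζ, map_div₀, Complex.conj_ofReal]
      have := hNC k
      field_simp
      simp [Complex.ofReal_pow]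
    rw [h1, hak, hQζ]
    have hγC : ((γ : ℝ) : ℂ) ≠ 0 := by exact_mod_cast hγ0.ne'
    have hγdd : (γ : ℂ) * ((dd : ℝ) : ℂ) = 1 - (γ : ℂ) + (γ : ℂ) * ((K : ℝ) : ℂ) := by
      rw [hddef]
      push_cast
      field_simp
    push_cast
    linear_combination (A * (starRingEnd ℂ) ((Φ k).eval ζ) / ((dd : ℝ) : ℂ)) * hγdd
      - (γ : ℂ) * A * (starRingEnd ℂ) ((Φ k).eval ζ) * (mul_inv_cancel₀ hddC)
  -- uniqueness: Ψ n = Q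
  have hΨQ : Ψ n = Q := by
    by_contra hne
    set D : Polynomial ℂ := Ψ n - Q with hD
    have hDne : D ≠ 0 := sub_ne_zero.2 hne
    have hΨdeg : (Ψ n).degree = (n : WithBot ℕ) := by
      rw [Polynomial.degree_eq_natDegree (hΨ.1 n).1.ne_zero, (hΨ.1 n).2]
    have hDdeg : D.degree < (n : WithBot ℕ) := by
      rw [← hΨdeg]
      exact Polynomial.degree_sub_lt (hΨdeg.trans hQdeg.symm) (hΨ.1 n).1.ne_zero
        (by rw [(hΨ.1 n).1.leadingCoeff, hQmonic.leadingCoeff])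
    have h1 : mInner ν (fun z => D.eval z) (fun z => (Ψ n).eval z) = 0 :=
      span_orth hνc Ψ hΨ.1 (Ψ n) n (fun k hk => hΨ.2 k n hk.ne) D hDdeg
    have h2 : mInner ν (fun z => D.eval z) (fun z => Q.eval z) = 0 :=
      span_orth hνc Φ hΦ.1 Q n key D hDdeg
    have hDD := mInner_sub_right hνc D (Ψ n) Q
    rw [h1, h2, sub_zero, ← hD] at hDD
    rw [mInner_self, Complex.ofReal_eq_zero] at hDD
    exact (normsq_integral_pos hνc hνs D hDne).ne' hDD
  rw [hΨQ, hQ, Polynomial.eval_sub, hSeval z]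
  ring
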